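/- Power loss of the t test from correlated errors for large signals (Supplementary Lemma, part 2): Let α ∈ (0, 1/2), so that z_α = Φ^{−1}(1−α) > 0, and let ρ ∈ (0,1). Let f denote the density of the chi-squared distribution with 1 degree of freedom and let T ~ χ₁². If h > max( 2z_α, P(T < 1) / (z_α · ∫₁^∞ f(t)·(1 − (ρt + 1 − ρ)^{−1/2}) dt) ), then Δπ(h, ρ) < 0, i.e. E[Φ(h·(ρT + 1 − ρ)^{−1/2} − z_α)] < Φ(h − z_α). -/

import Mathlib

open MeasureTheory ProbabilityTheory Filter
open Set

/-- Standard normal cumulative distribution function `Φ`. -/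
noncomputable def stdGaussCDF (t : ℝ) : ℝ :=
  ((gaussianReal 0 1) (Set.Iic t)).toReal

/-- Density of the chi-squared distribution with 1 degree of freedom. -/
noncomputable def chi1PDF (t : ℝ) : ℝ :=
  if 0 < t then (Real.sqrt (2 * Real.pi * t))⁻¹ * Real.exp (-t / 2) else 0

noncomputable def phi (x : ℝ) : ℝ := gaussianPDFReal 0 1 x

lemma phi_eq (x : ℝ) : phi x = (Real.sqrt (2 * Real.pi))⁻¹ * Real.exp (-x ^ 2 / 2) := by
  simp [phi, gaussianPDFReal]

lemma phi_pos (x : ℝ) : 0 < phi x := gaussianPDFReal_pos 0 1 x one_ne_zero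

lemma phi_nonneg (x : ℝ) : 0 ≤ phi x := (phi_pos x).le

lemma integrable_phi : Integrable phi := integrable_gaussianPDFReal 0 1

lemma integral_phi : ∫ x, phi x = 1 := integral_gaussianPDFReal_eq_one 0 one_ne_zero

lemma stdGaussCDF_eq (t : ℝ) : stdGaussCDF t = ∫ x in Iic t, phi x := by
  rw [stdGaussCDF, gaussianReal_apply_eq_integral 0 one_ne_zero,
    ENNReal.toReal_ofReal (integral_nonneg fun x => gaussianPDFReal_nonneg 0 1 x)]
  rfl

lemma one_sub_stdGaussCDF (t : ℝ) : 1 - stdGaussCDF t = ∫ x in Ioi t, phi x := by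
  rw [stdGaussCDF_eq]
  have := intervalIntegral.integral_Iic_add_Ioi (b := t) integrable_phi.integrableOn integrable_phi.integrableOn
  rw [integral_phi] at this
  linarith

lemma stdGaussCDF_le_one (t : ℝ) : stdGaussCDF t ≤ 1 := by
  have h := one_sub_stdGaussCDF t
  have : 0 ≤ ∫ x in Ioi t, phi x := integral_nonneg fun x => phi_nonneg x
  linarith

lemma stdGaussCDF_mono : Monotone stdGaussCDF := by
  intro a b hab
  rw [stdGaussCDF_eq, stdGaussCDF_eq]
  exact setIntegral_mono_set integrable_phi.integrableOn
    (ae_of_all _ fun x => phi_nonneg x) (HasSubset.Subset.eventuallyLE (Iic_subset_Iic.mpr hab))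

lemma stdGaussCDF_sub (a b : ℝ) (hab : a ≤ b) :
    stdGaussCDF b - stdGaussCDF a = ∫ x in Ioc a b, phi x := by
  rw [stdGaussCDF_eq, stdGaussCDF_eq,
    intervalIntegral.integral_Iic_sub_Iic integrable_phi.integrableOn integrable_phi.integrableOn,
    intervalIntegral.integral_of_le hab]

lemma stdGaussCDF_zero : stdGaussCDF 0 = 1 / 2 := by
  have h1 : (1 : ℝ) - stdGaussCDF 0 = ∫ x in Ioi (0:ℝ), phi x := one_sub_stdGaussCDF 0
  have h2 : ∫ x in Ioi (0:ℝ), phi x = ∫ x in Iic (0:ℝ), phi x := by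
    have he : ∀ x : ℝ, phi (-x) = phi x := by
      intro x; rw [phi_eq, phi_eq, neg_pow]; ring_nf
    calc ∫ x in Ioi (0:ℝ), phi x = ∫ x in Ioi (0:ℝ), phi (-x) := by simp_rw [he]
    _ = ∫ x in Iic (-(0:ℝ)), phi x := integral_comp_neg_Ioi 0 phi
    _ = ∫ x in Iic (0:ℝ), phi x := by norm_num
  rw [stdGaussCDF_eq] at *
  linarith

lemma hasDerivAt_negphi (x : ℝ) : HasDerivAt (fun y => -phi y) (x * phi x) x := by
  have h1 : HasDerivAt (fun y : ℝ => -y ^ 2 / 2) (-x) x := by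
    have := ((hasDerivAt_pow 2 x).neg).div_const 2
    refine this.congr_deriv ?_
    push_cast; ring
  have h2 : HasDerivAt (fun y : ℝ => Real.exp (-y ^ 2 / 2)) (Real.exp (-x ^ 2 / 2) * (-x)) x :=
    h1.exp
  have h3 := (h2.const_mul ((Real.sqrt (2 * Real.pi))⁻¹)).neg
  have he : (fun y => -phi y) = fun y => -((Real.sqrt (2 * Real.pi))⁻¹ *
      Real.exp (-y ^ 2 / 2)) := by
    funext y; rw [phi_eq]
  rw [he]
  refine h3.congr_deriv ?_
  rw [phi_eq]; ring

lemma tendsto_negphi : Tendsto (fun y => -phi y) atTop (nhds 0) := by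
  have h1 : Tendsto (fun y : ℝ => -y ^ 2 / 2) atTop atBot := by
    apply Tendsto.atBot_div_const (by norm_num)
    apply tendsto_neg_atBot_iff.mpr
    exact tendsto_pow_atTop (by norm_num)
  have h2 : Tendsto (fun y : ℝ => Real.exp (-y ^ 2 / 2)) atTop (nhds 0) :=
    Real.tendsto_exp_atBot.comp h1
  have h3 := (h2.const_mul ((Real.sqrt (2 * Real.pi))⁻¹)).neg
  simp only [mul_zero, neg_zero] at h3
  convert h3 using 2 with y
  rw [phi_eq]

lemma integral_Ioi_mul_phi {c : ℝ} (hc : 0 ≤ c) : ∫ x in Ioi c, x * phi x = phi c := by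
  have := integral_Ioi_of_hasDerivAt_of_nonneg' (g := fun y => -phi y)
    (g' := fun x => x * phi x) (a := c) (l := 0)
    (fun x hx => hasDerivAt_negphi x)
    (fun x hx => mul_nonneg (le_trans hc (le_of_lt hx)) (phi_nonneg x)) tendsto_negphi
  rw [this]; ring

lemma integrableOn_mul_phi {c : ℝ} (hc : 0 ≤ c) :
    IntegrableOn (fun x => x * phi x) (Ioi c) := by
  exact integrableOn_Ioi_deriv_of_nonneg' (fun x hx => hasDerivAt_negphi x)
    (fun x hx => mul_nonneg (le_trans hc (le_of_lt hx)) (phi_nonneg x)) tendsto_negphi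

lemma mills {c : ℝ} (hc : 0 < c) : 1 - stdGaussCDF c ≤ phi c / c := by
  rw [one_sub_stdGaussCDF]
  have h1 : ∫ x in Ioi c, phi x ≤ ∫ x in Ioi c, c⁻¹ * (x * phi x) := by
    apply setIntegral_mono_on integrable_phi.integrableOn
      ((integrableOn_mul_phi hc.le).const_mul _) measurableSet_Ioi
    intro x hx
    rw [Set.mem_Ioi] at hx
    have : 1 * phi x ≤ (c⁻¹ * x) * phi x := by
      apply mul_le_mul_of_nonneg_right _ (phi_nonneg x)
      rw [one_le_inv_mul₀ hc]; exact hx.le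
    calc phi x = 1 * phi x := (one_mul _).symm
    _ ≤ (c⁻¹ * x) * phi x := this
    _ = c⁻¹ * (x * phi x) := by ring
  rw [MeasureTheory.integral_const_mul, integral_Ioi_mul_phi hc.le] at h1
  calc (∫ x in Ioi c, phi x) ≤ c⁻¹ * phi c := h1
  _ = phi c / c := by ring

lemma cdf_diff_ge {a b : ℝ} (h1 : -b ≤ a) (h2 : a ≤ b) :
    (b - a) * phi b ≤ stdGaussCDF b - stdGaussCDF a := by
  have hb0 : 0 ≤ b := by linarith
  rw [stdGaussCDF_sub a b h2]
  have hpt : ∀ x ∈ Ioc a b, phi b ≤ phi x := by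
    intro x hx
    rw [Set.mem_Ioc] at hx
    have hx2 : x ^ 2 ≤ b ^ 2 := sq_le_sq' (by linarith [hx.1]) hx.2
    rw [phi_eq, phi_eq]
    apply mul_le_mul_of_nonneg_left _ (by positivity)
    exact Real.exp_le_exp.mpr (by linarith)
  have := setIntegral_mono_on (integrableOn_const (measure_Ioc_lt_top).ne)
    integrable_phi.integrableOn measurableSet_Ioc hpt
  rw [setIntegral_const, Real.volume_real_Ioc_of_le h2, smul_eq_mul] at this
  exact this


lemma chi1PDF_eq_gamma : chi1PDF = gammaPDFReal (1 / 2) (1 / 2) := by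
  funext t
  rcases lt_trichotomy t 0 with ht | ht | ht
  · rw [chi1PDF, if_neg (by linarith), gammaPDFReal, if_neg (by linarith)]
  · subst ht
    rw [chi1PDF, if_neg (lt_irrefl 0), gammaPDFReal, if_pos le_rfl]
    rw [Real.zero_rpow (by norm_num)]
    ring
  · rw [chi1PDF, if_pos ht, gammaPDFReal, if_pos ht.le]
    have h2 : (0:ℝ) < 2 * Real.pi := by positivity
    have hG : Real.Gamma (1 / 2 : ℝ) = Real.sqrt Real.pi := Real.Gamma_one_half_eq
    have hr1 : ((1:ℝ) / 2) ^ ((1:ℝ) / 2) = Real.sqrt (1 / 2) := by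
      rw [Real.sqrt_eq_rpow]
    have hr2 : t ^ ((1:ℝ) / 2 - 1) = (Real.sqrt t)⁻¹ := by
      have : ((1:ℝ) / 2 - 1) = -(1/2) := by norm_num
      rw [this, Real.rpow_neg ht.le, Real.sqrt_eq_rpow]
    have hexp : -((1:ℝ)/2 * t) = -t / 2 := by ring
    rw [hr1, hr2, hG, hexp]
    have hs : Real.sqrt (2 * Real.pi * t) = Real.sqrt 2 * Real.sqrt Real.pi * Real.sqrt t := by
      rw [Real.sqrt_mul (by positivity), Real.sqrt_mul (by norm_num)]
    have h12 : Real.sqrt (1/2 : ℝ) = (Real.sqrt 2)⁻¹ := by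
      rw [one_div, Real.sqrt_inv]
    rw [hs, h12]
    have hπ : Real.sqrt Real.pi ≠ 0 := by positivity
    have h2' : Real.sqrt 2 ≠ 0 := by positivity
    have htt : Real.sqrt t ≠ 0 := by positivity
    field_simp

lemma chi1PDF_nonneg (t : ℝ) : 0 ≤ chi1PDF t := by
  rw [chi1PDF_eq_gamma]; exact gammaPDFReal_nonneg (by norm_num) (by norm_num) t

lemma chi1PDF_pos {t : ℝ} (ht : 0 < t) : 0 < chi1PDF t := by
  rw [chi1PDF_eq_gamma]; exact gammaPDFReal_pos (by norm_num) (by norm_num) ht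

lemma measurable_chi1PDF : Measurable chi1PDF := by
  rw [chi1PDF_eq_gamma]; exact measurable_gammaPDFReal _ _

lemma lintegral_chi1PDF : ∫⁻ t, ENNReal.ofReal (chi1PDF t) = 1 := by
  rw [chi1PDF_eq_gamma]
  exact lintegral_gammaPDF_eq_one (by norm_num) (by norm_num)

lemma integrable_chi1PDF : Integrable chi1PDF := by
  refine ⟨measurable_chi1PDF.aestronglyMeasurable, ?_⟩
  rw [hasFiniteIntegral_iff_ofReal (ae_of_all _ chi1PDF_nonneg), lintegral_chi1PDF]
  exact ENNReal.one_lt_top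

lemma integral_chi1PDF : ∫ t, chi1PDF t = 1 := by
  rw [integral_eq_lintegral_of_nonneg_ae (ae_of_all _ chi1PDF_nonneg)
    measurable_chi1PDF.aestronglyMeasurable, lintegral_chi1PDF, ENNReal.toReal_one]


set_option maxHeartbeats 1000000 in
/-- **Supplementary Lemma, part 2 (power loss from correlated errors for large
signals):** if `h > max(2z_α, P(T < 1)/(z_α·∫₁^∞ f(t)(1 − (ρt + 1 − ρ)^{−1/2}) dt))`,
then `Δπ(h,ρ) < 0`, i.e. `E[Φ(h·(ρT + 1 − ρ)^{−1/2} − z_α)] < Φ(h − z_α)`, where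
`f = chi1PDF` is the density of `T ~ χ²₁`. -/
theorem power_loss_large_signal
    (α : ℝ) (hα : α ∈ Set.Ioo (0 : ℝ) (1 / 2))
    (zα : ℝ) (hzα : stdGaussCDF zα = 1 - α)
    (ρ : ℝ) (hρ : ρ ∈ Set.Ioo (0 : ℝ) 1)
    (h : ℝ)
    (hlarge : h > max (2 * zα)
      ((∫ t in Set.Iio (1 : ℝ), chi1PDF t) /
        (zα * ∫ t in Set.Ioi (1 : ℝ),
          chi1PDF t * (1 - (Real.sqrt (ρ * t + 1 - ρ))⁻¹)))) :
    (∫ t, chi1PDF t * stdGaussCDF (h / Real.sqrt (ρ * t + 1 - ρ) - zα)) <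
      stdGaussCDF (h - zα) := by
  obtain ⟨hα0, hα2⟩ := hα
  obtain ⟨hρ0, hρ1⟩ := hρ
  -- zα > 0
  have hz : 0 < zα := by
    by_contra hcon
    push_neg at hcon
    have := stdGaussCDF_mono hcon
    rw [hzα, stdGaussCDF_zero] at this
    linarith
  have h2z : 2 * zα < h := lt_of_le_of_lt (le_max_left _ _) hlarge
  have hh : 0 < h := by linarith
  have hzhz : zα ≤ h - zα := by linarith
  set c := h - zα with hc
  set Φc := stdGaussCDF c with hΦc
  set φc := phi c with hφc
  have hφcpos : 0 < φc := phi_pos c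
  set P : ℝ := ∫ t in Iio (1:ℝ), chi1PDF t with hP
  set I : ℝ := ∫ t in Ioi (1:ℝ), chi1PDF t * (1 - (Real.sqrt (ρ * t + 1 - ρ))⁻¹) with hI
  have hPnn : 0 ≤ P := integral_nonneg fun t => chi1PDF_nonneg t
  -- measurability
  have measw : Measurable fun t : ℝ => Real.sqrt (ρ * t + 1 - ρ) :=
    Real.continuous_sqrt.measurable.comp (((measurable_id.const_mul ρ).add_const 1).sub_const ρ)
  have measG : Measurable fun t : ℝ => h / Real.sqrt (ρ * t + 1 - ρ) - zα :=
    (measurable_const.div measw).sub measurable_const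
  have measΦG : Measurable fun t : ℝ =>
      stdGaussCDF (h / Real.sqrt (ρ * t + 1 - ρ) - zα) :=
    stdGaussCDF_mono.measurable.comp measG
  have meas_fΦG : Measurable fun t : ℝ =>
      chi1PDF t * stdGaussCDF (h / Real.sqrt (ρ * t + 1 - ρ) - zα) :=
    measurable_chi1PDF.mul measΦG
  have cdf_nonneg : ∀ x : ℝ, 0 ≤ stdGaussCDF x := fun x => ENNReal.toReal_nonneg
  -- integrability of f * Φ(G)
  have int_fΦG : Integrable fun t : ℝ =>
      chi1PDF t * stdGaussCDF (h / Real.sqrt (ρ * t + 1 - ρ) - zα) := by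
    refine integrable_chi1PDF.mono meas_fΦG.aestronglyMeasurable (ae_of_all _ fun t => ?_)
    rw [Real.norm_eq_abs, Real.norm_eq_abs, abs_of_nonneg (chi1PDF_nonneg t),
      abs_of_nonneg (mul_nonneg (chi1PDF_nonneg t) (cdf_nonneg _))]
    calc chi1PDF t * stdGaussCDF _ ≤ chi1PDF t * 1 :=
      mul_le_mul_of_nonneg_left (stdGaussCDF_le_one _) (chi1PDF_nonneg t)
    _ = chi1PDF t := mul_one _
  have int_fc : Integrable fun t : ℝ => chi1PDF t * Φc := integrable_chi1PDF.mul_const _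
  -- integrability of f * (1 - g) on Ioi 1
  have int_I : IntegrableOn (fun t : ℝ =>
      chi1PDF t * (1 - (Real.sqrt (ρ * t + 1 - ρ))⁻¹)) (Ioi 1) := by
    refine (integrable_chi1PDF.restrict (s := Ioi 1)).mono
      ((measurable_chi1PDF.mul (measurable_const.sub measw.inv)).aestronglyMeasurable)
      (((ae_restrict_iff' measurableSet_Ioi).mpr (ae_of_all _ fun t ht => ?_)))
    rw [Set.mem_Ioi] at ht
    have hs1 : (1:ℝ) < ρ * t + 1 - ρ := by nlinarith
    have hw1 : (1:ℝ) < Real.sqrt (ρ * t + 1 - ρ) := by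
      rw [show (1:ℝ) = Real.sqrt 1 by simp]
      exact Real.sqrt_lt_sqrt (by norm_num) (by simpa using hs1)
    have hg0 : 0 < (Real.sqrt (ρ * t + 1 - ρ))⁻¹ := inv_pos.mpr (by linarith)
    have hg1 : (Real.sqrt (ρ * t + 1 - ρ))⁻¹ < 1 := inv_lt_one_of_one_lt₀ hw1
    rw [Real.norm_eq_abs, Real.norm_eq_abs, abs_of_nonneg (chi1PDF_nonneg t),
      abs_of_nonneg (mul_nonneg (chi1PDF_nonneg t) (by linarith))]
    calc chi1PDF t * (1 - (Real.sqrt (ρ * t + 1 - ρ))⁻¹) ≤ chi1PDF t * 1 :=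
      mul_le_mul_of_nonneg_left (by linarith) (chi1PDF_nonneg t)
    _ = chi1PDF t := mul_one _
  -- I > 0
  have hIpos : 0 < I := by
    rw [hI, setIntegral_pos_iff_support_of_nonneg_ae _ int_I]
    · have hsub : Ioi (1:ℝ) ⊆ Function.support (fun t : ℝ =>
          chi1PDF t * (1 - (Real.sqrt (ρ * t + 1 - ρ))⁻¹)) := by
        intro t ht
        rw [Set.mem_Ioi] at ht
        have hs1 : (1:ℝ) < ρ * t + 1 - ρ := by nlinarith
        have hw1 : (1:ℝ) < Real.sqrt (ρ * t + 1 - ρ) := by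
          rw [show (1:ℝ) = Real.sqrt 1 by simp]
          exact Real.sqrt_lt_sqrt (by norm_num) (by simpa using hs1)
        have hg1 : (Real.sqrt (ρ * t + 1 - ρ))⁻¹ < 1 := inv_lt_one_of_one_lt₀ hw1
        have hf : 0 < chi1PDF t := chi1PDF_pos (by linarith)
        simp only [Function.mem_support]
        exact ne_of_gt (mul_pos hf (by linarith))
      refine lt_of_lt_of_le ?_ (measure_mono fun t ht => ⟨hsub ht, ht⟩)
      simp [Real.volume_Ioi]
    · refine (ae_restrict_iff' measurableSet_Ioi).mpr (ae_of_all _ fun t ht => ?_)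
      rw [Set.mem_Ioi] at ht
      have hs1 : (1:ℝ) < ρ * t + 1 - ρ := by nlinarith
      have hw1 : (1:ℝ) < Real.sqrt (ρ * t + 1 - ρ) := by
        rw [show (1:ℝ) = Real.sqrt 1 by simp]
        exact Real.sqrt_lt_sqrt (by norm_num) (by simpa using hs1)
      have hg1 : (Real.sqrt (ρ * t + 1 - ρ))⁻¹ < 1 := inv_lt_one_of_one_lt₀ hw1
      exact mul_nonneg (chi1PDF_nonneg t) (by linarith)
  -- from hlarge : P < h * (zα * I)
  have hPI : P < h * (zα * I) := by
    have hB : P / (zα * I) < h := lt_of_le_of_lt (le_max_right _ _) hlarge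
    have hzI : 0 < zα * I := mul_pos hz hIpos
    calc P = P / (zα * I) * (zα * I) := by field_simp
    _ < h * (zα * I) := by
      exact mul_lt_mul_of_pos_right hB hzI
  -- rewrite RHS as integral
  have hRHS : Φc = ∫ t, chi1PDF t * Φc := by
    rw [integral_mul_const, integral_chi1PDF, one_mul]
  rw [hRHS, ← sub_neg, ← integral_sub int_fΦG int_fc]
  -- split the integral
  set D : ℝ → ℝ := fun t => chi1PDF t * stdGaussCDF (h / Real.sqrt (ρ * t + 1 - ρ) - zα)
    - chi1PDF t * Φc with hD
  have int_D : Integrable D := int_fΦG.sub int_fc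
  have hsplit : ∫ t, D t = (∫ t in Iic (1:ℝ), D t) + ∫ t in Ioi (1:ℝ), D t :=
    (intervalIntegral.integral_Iic_add_Ioi int_D.integrableOn int_D.integrableOn).symm
  -- bound on Iic 1
  have hb1 : (∫ t in Iic (1:ℝ), D t) ≤ P * (1 - Φc) := by
    have hmono : (∫ t in Iic (1:ℝ), D t) ≤ ∫ t in Iic (1:ℝ), chi1PDF t * (1 - Φc) := by
      apply setIntegral_mono int_D.integrableOn
        ((integrable_chi1PDF.mul_const _).integrableOn)
      intro t
      have h1 : stdGaussCDF (h / Real.sqrt (ρ * t + 1 - ρ) - zα) ≤ 1 := stdGaussCDF_le_one _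
      have := mul_le_mul_of_nonneg_left (sub_le_sub_right h1 Φc) (chi1PDF_nonneg t)
      simp only [hD]
      nlinarith [chi1PDF_nonneg t]
    rw [integral_mul_const,
      show (∫ a in Iic (1:ℝ), chi1PDF a) = P from integral_Iic_eq_integral_Iio] at hmono
    exact hmono
  -- bound on Ioi 1
  have hb2 : (∫ t in Ioi (1:ℝ), D t) ≤ -(h * φc) * I := by
    have hmono : (∫ t in Ioi (1:ℝ), D t) ≤ ∫ t in Ioi (1:ℝ),
        -(h * φc) * (chi1PDF t * (1 - (Real.sqrt (ρ * t + 1 - ρ))⁻¹)) := by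
      apply setIntegral_mono_on int_D.integrableOn (int_I.const_mul _) measurableSet_Ioi
      intro t ht
      rw [Set.mem_Ioi] at ht
      have hs1 : (1:ℝ) < ρ * t + 1 - ρ := by nlinarith
      have hw1 : (1:ℝ) < Real.sqrt (ρ * t + 1 - ρ) := by
        rw [show (1:ℝ) = Real.sqrt 1 by simp]
        exact Real.sqrt_lt_sqrt (by norm_num) (by simpa using hs1)
      set w := Real.sqrt (ρ * t + 1 - ρ) with hw
      have hg0 : 0 < w⁻¹ := inv_pos.mpr (by linarith)
      have hg1 : w⁻¹ < 1 := inv_lt_one_of_one_lt₀ hw1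
      have hdiv : h / w = h * w⁻¹ := div_eq_mul_inv h w
      have hhw0 : 0 < h * w⁻¹ := mul_pos hh hg0
      have hhw1 : h * w⁻¹ ≤ h := by nlinarith
      have hcd := cdf_diff_ge (a := h * w⁻¹ - zα) (b := h - zα)
        (by linarith) (by linarith)
      have hrearr : (h - zα - (h * w⁻¹ - zα)) = h * (1 - w⁻¹) := by ring
      rw [hrearr] at hcd
      -- hcd : h * (1 - w⁻¹) * φc ≤ Φc - Φ(h*w⁻¹ - zα)
      have hΦG : stdGaussCDF (h / w - zα) - Φc ≤ -(h * (1 - w⁻¹) * φc) := by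
        rw [hdiv]; linarith
      have := mul_le_mul_of_nonneg_left hΦG (chi1PDF_nonneg t)
      simp only [hD]
      nlinarith [chi1PDF_nonneg t]
    rw [integral_const_mul] at hmono
    exact hmono
  -- Mills : 1 - Φc ≤ φc / zα
  have hmills : 1 - Φc ≤ φc / zα := by
    calc 1 - Φc ≤ φc / c := mills (by linarith)
    _ ≤ φc / zα := div_le_div_of_nonneg_left hφcpos.le hz hzhz
  -- combine
  have hfinal : (∫ t, D t) < 0 := by
    rw [hsplit]
    have h1 : P * (1 - Φc) ≤ P * (φc / zα) := mul_le_mul_of_nonneg_left hmills hPnn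
    have h2 : P * (φc / zα) < h * (zα * I) * (φc / zα) :=
      mul_lt_mul_of_pos_right hPI (by positivity)
    have h3 : h * (zα * I) * (φc / zα) = h * φc * I := by
      field_simp
    nlinarith
  exact hfinal
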